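/- Let F be a field with char F ≠ 2 and let I be an infinite set. Then the Lie algebra o_∞(I,F) of skew-symmetric finitary matrices is perfect: every element of o_∞(I,F) is a finite sum of commutators of elements of o_∞(I,F), i.e. o_∞(I,F) = [o_∞(I,F), o_∞(I,F)]. -/

import Mathlib

open Matrix

/-- The product of two `I × I` matrices, defined via `finsum`; it is well defined on
finitary matrices. -/
noncomputable def matMul {F I : Type*} [Field F] (a b : Matrix I I F) : Matrix I I F :=
  fun i j => ∑ᶠ k, a i k * b k j

/-- A finitary matrix: only finitely many nonzero entries. -/
def IsFinitary {F I : Type*} [Field F] (a : Matrix I I F) : Prop :=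
  {p : I × I | a p.1 p.2 ≠ 0}.Finite

open Classical in
/-- `c` times the elementary skew matrix `E_{ij} - E_{ji}`. -/
noncomputable def cF {F I : Type*} [Field F] (i j : I) (c : F) : Matrix I I F :=
  fun x y => (if x = i ∧ y = j then c else 0) - (if x = j ∧ y = i then c else 0)

lemma cF_skew {F I : Type*} [Field F] (i j : I) (c : F) : (cF i j c)ᵀ = -(cF i j c) := by
  classical
  funext x y
  simp only [Matrix.transpose_apply, Matrix.neg_apply, cF]
  rw [neg_sub]
  congr 1 <;> exact if_congr and_comm rfl rfl

lemma cF_fin {F I : Type*} [Field F] (i j : I) (c : F) : IsFinitary (cF i j c) := by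
  apply Set.Finite.subset ((Set.finite_singleton ((j, i) : I × I)).insert (i, j))
  intro p hp
  simp only [Set.mem_setOf_eq, cF] at hp
  by_cases h1 : p.1 = i ∧ p.2 = j
  · exact Set.mem_insert_iff.mpr (Or.inl (Prod.ext h1.1 h1.2))
  · by_cases h2 : p.1 = j ∧ p.2 = i
    · exact Set.mem_insert_iff.mpr (Or.inr (Prod.ext h2.1 h2.2))
    · simp [h1, h2] at hp

lemma cF_entry_ne {F I : Type*} [Field F] {i j : I} {c : F} {x y : I}
    (h : cF i j c x y ≠ 0) : (x = i ∧ y = j) ∨ (x = j ∧ y = i) := by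
  by_cases h1 : x = i ∧ y = j
  · exact Or.inl h1
  by_cases h2 : x = j ∧ y = i
  · exact Or.inr h2
  simp only [cF, if_neg h1, if_neg h2, sub_zero] at h
  exact absurd rfl h

lemma matMul_cF {F I : Type*} [Field F] {i j p : I} (hij : i ≠ j) (hpi : p ≠ i)
    (hpj : p ≠ j) (c : F) :
    matMul (cF i p c) (cF p j 1) - matMul (cF p j 1) (cF i p c) = cF i j c := by
  classical
  funext x y
  have h1 : matMul (cF i p c) (cF p j 1) x y = cF i p c x p * cF p j (1:F) p y := by
    apply finsum_eq_single
    intro k hk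
    rcases eq_or_ne (cF i p c x k) 0 with h | h
    · rw [h, zero_mul]
    · rcases cF_entry_ne h with ⟨-, h2⟩ | ⟨-, h2⟩
      · exact absurd h2 hk
      · have hz : cF p j (1:F) k y = 0 := by
          by_contra h3
          rcases cF_entry_ne h3 with ⟨h4, -⟩ | ⟨h4, -⟩
          · exact hk h4
          · rw [h2] at h4; exact hij h4
        rw [hz, mul_zero]
  have h2 : matMul (cF p j 1) (cF i p c) x y = cF p j (1:F) x p * cF i p c p y := by
    apply finsum_eq_single
    intro k hk
    rcases eq_or_ne (cF p j (1:F) x k) 0 with h | h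
    · rw [h, zero_mul]
    · rcases cF_entry_ne h with ⟨-, h2⟩ | ⟨-, h2⟩
      · have hz : cF i p c k y = 0 := by
          by_contra h3
          rcases cF_entry_ne h3 with ⟨h4, -⟩ | ⟨h4, -⟩
          · rw [h2] at h4; exact hij h4.symm
          · exact hk h4
        rw [hz, mul_zero]
      · exact absurd h2 hk
  rw [Matrix.sub_apply, h1, h2]
  simp only [cF]
  have hip : ¬ (i = p) := fun h => hpi h.symm
  have hjp : ¬ (j = p) := fun h => hpj h.symm
  by_cases hx1 : x = i <;> by_cases hx2 : x = j <;> by_cases hy1 : y = i <;>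
    by_cases hy2 : y = j <;>
    simp_all

lemma cF_mem_set {F I : Type*} [Field F] [Infinite I] {i j : I} (hij : i ≠ j) (c : F) :
    cF i j c ∈ {x : Matrix I I F | ∃ b c : Matrix I I F,
          IsFinitary b ∧ bᵀ = -b ∧ IsFinitary c ∧ cᵀ = -c ∧
          x = matMul b c - matMul c b} := by
  classical
  obtain ⟨p, hp⟩ := Infinite.exists_notMem_finset ({i, j} : Finset I)
  simp only [Finset.mem_insert, Finset.mem_singleton, not_or] at hp
  exact ⟨cF i p c, cF p j 1, cF_fin _ _ _, cF_skew _ _ _, cF_fin _ _ _, cF_skew _ _ _,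
    (matMul_cF hij hp.1 hp.2 c).symm⟩

theorem stmt_3 (F I : Type*) [Field F] [Infinite I] (hchar : ringChar F ≠ 2) :
    ∀ a : Matrix I I F, IsFinitary a → aᵀ = -a →
      a ∈ AddSubgroup.closure
        {x : Matrix I I F | ∃ b c : Matrix I I F,
          IsFinitary b ∧ bᵀ = -b ∧ IsFinitary c ∧ cᵀ = -c ∧
          x = matMul b c - matMul c b} := by
  classical
  have two_ne : (2 : F) ≠ 0 := Ring.two_ne_zero hchar
  suffices h : ∀ (n : ℕ) (a : Matrix I I F) (hfin : IsFinitary a),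
      hfin.toFinset.card ≤ n → aᵀ = -a → a ∈ AddSubgroup.closure
        {x : Matrix I I F | ∃ b c : Matrix I I F,
          IsFinitary b ∧ bᵀ = -b ∧ IsFinitary c ∧ cᵀ = -c ∧
          x = matMul b c - matMul c b} by
    intro a hfin hskew
    exact h hfin.toFinset.card a hfin le_rfl hskew
  intro n
  induction n with
  | zero =>
    intro a hfin hcard hskew
    have : a = 0 := by
      ext x y
      by_contra h
      have hxy : a x y ≠ 0 := by simpa using h
      have hm : (x, y) ∈ hfin.toFinset := (Set.Finite.mem_toFinset _).mpr hxy
      have := Finset.card_pos.mpr ⟨_, hm⟩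
      omega
    rw [this]; exact zero_mem _
  | succ n ih =>
    intro a hfin hcard hskew
    rcases eq_or_ne a 0 with rfl | hne
    · exact zero_mem _
    · -- pick a nonzero entry
      obtain ⟨i, j, hij0⟩ : ∃ i j, a i j ≠ 0 := by
        by_contra h
        push_neg at h
        exact hne (funext fun x => funext fun y => h x y)
      -- diagonal is zero
      have hdiag : ∀ x, a x x = 0 := by
        intro x
        have := congrFun (congrFun hskew x) x
        simp only [Matrix.transpose_apply, Matrix.neg_apply] at this
        have h2 : (2 : F) * a x x = 0 := by linear_combination this
        exact (mul_eq_zero.mp h2).resolve_left two_ne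
      have hij : i ≠ j := fun h => hij0 (h ▸ hdiag i)
      have hji : a j i = -a i j := by
        have h0 := congrFun (congrFun hskew j) i
        simp only [Matrix.transpose_apply, Matrix.neg_apply] at h0
        linear_combination h0
      set D := cF i j (a i j) with hD
      have hDentry : ∀ x y, D x y ≠ 0 → (x = i ∧ y = j) ∨ (x = j ∧ y = i) :=
        fun x y h => cF_entry_ne h
      set a' := a - D with ha'
      have ha'ij : a' i j = 0 := by
        simp [ha', hD, cF, hij, Matrix.sub_apply]
      have ha'ji : a' j i = 0 := by
        simp [ha', hD, cF, hij, Ne.symm hij, Matrix.sub_apply, hji]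
      have hsub : ∀ x y, ¬(x = i ∧ y = j) → ¬(x = j ∧ y = i) → a' x y = a x y := by
        intro x y h1 h2
        simp [ha', hD, cF, h1, h2, Matrix.sub_apply]
      have hfin' : IsFinitary a' := by
        apply Set.Finite.subset (hfin.union (cF_fin i j (a i j)))
        intro p hp
        simp only [Set.mem_setOf_eq] at hp
        by_contra hc
        simp only [Set.mem_union, Set.mem_setOf_eq, not_or, not_not] at hc
        exact hp (by rw [ha', Matrix.sub_apply, hc.1, hD, hc.2, sub_zero])
      have hskew' : a'ᵀ = -a' := by
        rw [ha', Matrix.transpose_sub, hskew, cF_skew]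
        abel
      have hcard' : hfin'.toFinset.card ≤ n := by
        have hsubF : hfin'.toFinset ⊆ hfin.toFinset.erase (i, j) := by
          intro p hp
          have hp : a' p.1 p.2 ≠ 0 := (Set.Finite.mem_toFinset hfin').mp hp
          rcases eq_or_ne p (i, j) with rfl | hpne1
          · exact absurd ha'ij hp
          · rcases eq_or_ne p (j, i) with rfl | hpne2
            · exact absurd ha'ji hp
            · have h1 : ¬(p.1 = i ∧ p.2 = j) := fun h => hpne1 (Prod.ext h.1 h.2)
              have h2 : ¬(p.1 = j ∧ p.2 = i) := fun h => hpne2 (Prod.ext h.1 h.2)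
              rw [Finset.mem_erase]
              refine ⟨hpne1, ?_⟩
              refine (Set.Finite.mem_toFinset hfin).mpr ?_
              rw [hsub p.1 p.2 h1 h2] at hp
              exact hp
        have hmem : (i, j) ∈ hfin.toFinset := by
          exact (Set.Finite.mem_toFinset hfin).mpr hij0
        calc hfin'.toFinset.card ≤ (hfin.toFinset.erase (i, j)).card :=
              Finset.card_le_card hsubF
          _ = hfin.toFinset.card - 1 := Finset.card_erase_of_mem hmem
          _ ≤ n := by
              have := Finset.card_pos.mpr ⟨_, hmem⟩
              omega
      have ha'mem := ih a' hfin' hcard' hskew'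
      have hDmem : D ∈ AddSubgroup.closure _ :=
        AddSubgroup.subset_closure (cF_mem_set hij (a i j))
      have : a = a' + D := by rw [ha']; abel
      rw [this]
      exact add_mem ha'mem hDmem
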